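/- Let H be a Hilbert space, P an orthogonal projection on H, and U a bounded operator on H that is upper-triangular with respect to the decomposition H = (1−P)H ⊕ PH, i.e., PU(1−P) = 0. Write U₁₁ = (1−P)U(1−P) acting on (1−P)H, U₂₂ = PUP acting on PH, and U₁₂ = (1−P)UP. Then U is unitary if and only if: (1) U₁₁ is an isometry on (1−P)H; (2) U₂₂ is a coisometry on PH (i.e., U₂₂U₂₂* = 1); and (3) U₁₂ restricts to a partial isometry from ker(U₂₂) onto the orthogonal complement of the range of U₁₁ in (1−P)H, and vanishes on ker(U₂₂)^⊥. -/

import Mathlib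

open ContinuousLinearMap
open scoped ComplexInnerProductSpace

section Aux
variable {H : Type*} [NormedAddCommGroup H] [InnerProductSpace ℂ H]

private lemma aux_norm_of_inner (x y : H) (h : ⟪x, x⟫ = ⟪y, y⟫) : ‖x‖ = ‖y‖ := by
  have h1 : (‖x‖ : ℝ) ^ 2 = ‖y‖ ^ 2 := by
    have := congrArg RCLike.re h
    rwa [@inner_self_eq_norm_sq ℂ, @inner_self_eq_norm_sq ℂ] at this
  nlinarith [norm_nonneg x, norm_nonneg y]

private lemma aux_inner_of_norm (K : Submodule ℂ H) (B : H →L[ℂ] H)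
    (h : ∀ x ∈ K, ‖B x‖ = ‖x‖) {x y : H} (hx : x ∈ K) (hy : y ∈ K) :
    ⟪B x, B y⟫ = ⟪x, y⟫ := by
  have e1 : ‖B x + B y‖ = ‖x + y‖ := by rw [← map_add]; exact h _ (K.add_mem hx hy)
  have e2 : ‖B x - B y‖ = ‖x - y‖ := by rw [← map_sub]; exact h _ (K.sub_mem hx hy)
  have e3 : ‖B x - (RCLike.I : ℂ) • B y‖ = ‖x - (RCLike.I : ℂ) • y‖ := by
    rw [← map_smul, ← map_sub]; exact h _ (K.sub_mem hx (K.smul_mem _ hy))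
  have e4 : ‖B x + (RCLike.I : ℂ) • B y‖ = ‖x + (RCLike.I : ℂ) • y‖ := by
    rw [← map_smul, ← map_add]; exact h _ (K.add_mem hx (K.smul_mem _ hy))
  rw [inner_eq_sum_norm_sq_div_four, inner_eq_sum_norm_sq_div_four, e1, e2, e3, e4]

end Aux

set_option maxHeartbeats 1000000 in
set_option maxHeartbeats 1000000 in
/-- let `P` be an orthogonal projection on a Hilbert space `H` and `U`
a bounded operator that is upper triangular for `H = (1-P)H ⊕ PH`, i.e. `PU(1-P) = 0`.
Then `U` is unitary iff: (1) `U₁₁ = (1-P)U(1-P)` is an isometry on `(1-P)H`;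
(2) `U₂₂ = PUP` is a coisometry on `PH` (`U₂₂U₂₂* = 1`); (3) `U₁₂ = (1-P)UP` is a
partial isometry from `ker U₂₂` onto the cokernel of `U₁₁` (the orthogonal complement
of the range of `U₁₁` in `(1-P)H`), vanishing on `(ker U₂₂)ᗮ`. -/
theorem triangular_unitary_iff
    {H : Type*} [NormedAddCommGroup H] [InnerProductSpace ℂ H] [CompleteSpace H]
    (P U : H →L[ℂ] H) (hP1 : P ∘L P = P) (hP2 : adjoint P = P)
    (htri : P ∘L (U ∘L (1 - P)) = 0) :
    (adjoint U ∘L U = 1 ∧ U ∘L adjoint U = 1) ↔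
      ((∀ x : H, P x = 0 → ‖U x‖ = ‖x‖) ∧
       ((P ∘L (U ∘L P)) ∘L (P ∘L (adjoint U ∘L P)) = P) ∧
       ((∀ x ∈ LinearMap.ker (P ∘L (U ∘L P) : H →ₗ[ℂ] H) ⊓ LinearMap.range (P : H →ₗ[ℂ] H),
           ‖((1 - P) ∘L (U ∘L P)) x‖ = ‖x‖) ∧
        (∀ x ∈ (LinearMap.ker (P ∘L (U ∘L P) : H →ₗ[ℂ] H) ⊓ LinearMap.range (P : H →ₗ[ℂ] H))ᗮ,
           ((1 - P) ∘L (U ∘L P)) x = 0) ∧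
        (((LinearMap.ker (P ∘L (U ∘L P) : H →ₗ[ℂ] H) ⊓ LinearMap.range (P : H →ₗ[ℂ] H)).map
             ((1 - P) ∘L (U ∘L P) : H →ₗ[ℂ] H)).topologicalClosure =
           (LinearMap.range ((1 - P) ∘L (U ∘L (1 - P)) : H →ₗ[ℂ] H))ᗮ ⊓ LinearMap.range ((1 - P : H →L[ℂ] H) : H →ₗ[ℂ] H)))) := by
  -- basic pointwise facts
  have hPp : ∀ x, P (P x) = P x := fun x => by
    simpa using ContinuousLinearMap.ext_iff.1 hP1 x
  have hPsa : ∀ x y : H, ⟪P x, y⟫ = ⟪x, P y⟫ := fun x y => by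
    have := adjoint_inner_left P y x; rwa [hP2] at this
  have htriP : ∀ x, P (U x) = P (U (P x)) := fun x => by
    have h0 := ContinuousLinearMap.ext_iff.1 htri x
    simp only [comp_apply, sub_apply, one_apply, zero_apply, map_sub] at h0
    exact sub_eq_zero.1 h0
  have hranP : ∀ x, x ∈ LinearMap.range (P : H →ₗ[ℂ] H) ↔ P x = x := fun x => by
    constructor
    · rintro ⟨y, rfl⟩; exact hPp y
    · intro h; exact ⟨x, h⟩
  have hranQ : ∀ x : H, x ∈ LinearMap.range (((1 : H →L[ℂ] H) - P : H →L[ℂ] H) : H →ₗ[ℂ] H) ↔ P x = 0 := fun x => by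
    constructor
    · rintro ⟨y, rfl⟩
      simp [sub_apply, one_apply, map_sub, hPp]
    · intro h; exact ⟨x, by simp [sub_apply, one_apply, h]⟩
  have hKmem : ∀ x, x ∈ LinearMap.ker (P ∘L (U ∘L P) : H →ₗ[ℂ] H) ⊓ LinearMap.range (P : H →ₗ[ℂ] H) ↔
      (P (U (P x)) = 0 ∧ P x = x) := fun x => by
    rw [Submodule.mem_inf, LinearMap.mem_ker, hranP x]
    simp [comp_apply]
  have hBapp : ∀ x, ((1 - P) ∘L (U ∘L P)) x = U (P x) - P (U (P x)) := fun x => by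
    simp only [comp_apply, sub_apply, one_apply_eq_self]
  have hCapp : ∀ x, (P ∘L (U ∘L P)) x = P (U (P x)) := fun x => by
    simp only [comp_apply]
  have hBk : ∀ k ∈ LinearMap.ker (P ∘L (U ∘L P) : H →ₗ[ℂ] H) ⊓ LinearMap.range (P : H →ₗ[ℂ] H),
      ((1 - P) ∘L (U ∘L P)) k = U k := fun k hk => by
    obtain ⟨h1, h2⟩ := (hKmem k).1 hk
    rw [hBapp, h1, sub_zero, h2]
  have hAz : ∀ z, ((1 - P) ∘L (U ∘L (1 - P))) z = U (z - P z) := fun z => by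
    have hz0 : P (z - P z) = 0 := by simp [map_sub, hPp]
    have h0 : P (U (z - P z)) = 0 := by rw [htriP (z - P z), hz0]; simp
    have e : ((1 - P) ∘L (U ∘L (1 - P))) z = U (z - P z) - P (U (z - P z)) := by
      simp only [comp_apply, sub_apply, one_apply_eq_self]
    rw [e, h0, sub_zero]
  have hcoe : ∀ v, ((1 - P) ∘L (U ∘L P) : H →ₗ[ℂ] H) v = ((1 - P) ∘L (U ∘L P)) v :=
    fun v => rfl
  constructor
  · rintro ⟨hL, hR⟩
    have hULi : ∀ x, adjoint U (U x) = x := fun x => by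
      simpa using ContinuousLinearMap.ext_iff.1 hL x
    have hURi : ∀ x, U (adjoint U x) = x := fun x => by
      simpa using ContinuousLinearMap.ext_iff.1 hR x
    have hinner : ∀ x y : H, ⟪U x, U y⟫ = ⟪x, y⟫ := fun x y => by
      have h1 := adjoint_inner_left U y (U x)
      rw [hULi x] at h1
      exact h1.symm
    have hadjP : ∀ x, P (adjoint U (P x)) = adjoint U (P x) := fun x => by
      set z := adjoint U (P x) - P (adjoint U (P x)) with hz
      have hz0 : ∀ y, ⟪z, y⟫ = 0 := fun y => by
        have l1 : ⟪adjoint U (P x), y⟫ = ⟪P x, U y⟫ := adjoint_inner_left U y (P x)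
        have l2 : ⟪P (adjoint U (P x)), y⟫ = ⟪P x, U (P y)⟫ := by
          rw [hPsa]; exact adjoint_inner_left U (P y) (P x)
        have l3 : ⟪z, y⟫ = ⟪x, P (U y)⟫ - ⟪x, P (U (P y))⟫ := by
          rw [hz, inner_sub_left, l1, l2, hPsa, hPsa]
        rw [l3, ← htriP y, sub_self]
      have : z = 0 := inner_self_eq_zero.1 (hz0 z)
      exact (sub_eq_zero.1 this).symm
    refine ⟨fun x _ => aux_norm_of_inner _ _ (hinner x x), ?_, ?_, ?_, ?_⟩
    · ext x
      simp only [comp_apply]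
      rw [hPp, hadjP, hURi (P x), hPp]
    · intro x hx
      rw [hBk x hx]
      exact aux_norm_of_inner _ _ (hinner x x)
    · intro x hx
      have key : ∀ y : H, ⟪y, ((1 - P) ∘L (U ∘L P)) x⟫ = 0 := fun y => by
        rw [← adjoint_inner_left ((1 - P) ∘L (U ∘L P)) x y]
        refine (Submodule.mem_orthogonal _ x).1 hx _ ?_
        have hform : adjoint ((1 - P) ∘L (U ∘L P)) y = P (adjoint U (y - P y)) := by
          have hQadj : adjoint ((1 : H →L[ℂ] H) - P) = 1 - P := by
            rw [← star_eq_adjoint, star_sub, star_one, star_eq_adjoint, hP2]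
          rw [adjoint_comp, adjoint_comp, hP2, hQadj]
          simp only [comp_apply, sub_apply, one_apply_eq_self]
        rw [hKmem, hform]
        refine ⟨?_, hPp _⟩
        have hUv : U (adjoint U (y - P y)) = y - P y := hURi (y - P y)
        calc P (U (P (P (adjoint U (y - P y)))))
            = P (U (P (adjoint U (y - P y)))) := by rw [hPp]
          _ = P (U (adjoint U (y - P y))) := (htriP _).symm
          _ = 0 := by rw [hUv]; simp [map_sub, hPp]
      exact inner_self_eq_zero.1 (key _)
    · apply le_antisymm
      · apply Submodule.topologicalClosure_minimal
        · intro y hy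
          rw [Submodule.mem_map] at hy
          obtain ⟨k, hk, rfl⟩ := hy
          obtain ⟨hk1, hk2⟩ := (hKmem k).1 hk
          rw [Submodule.mem_inf]
          constructor
          · rw [Submodule.mem_orthogonal]
            intro u hu
            obtain ⟨z, rfl⟩ := LinearMap.mem_range.1 hu
            rw [hcoe, hBk k hk, ContinuousLinearMap.coe_coe, hAz, hinner, inner_sub_left, hPsa, hk2, sub_self]
          · rw [hcoe, hranQ, hBk k hk, htriP k, hk1]
        · have hset : ((LinearMap.range ((1 - P) ∘L (U ∘L (1 - P)) : H →ₗ[ℂ] H))ᗮ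
              ⊓ LinearMap.range (((1 : H →L[ℂ] H) - P : H →L[ℂ] H) : H →ₗ[ℂ] H) : Submodule ℂ H)
              = ((LinearMap.range ((1 - P) ∘L (U ∘L (1 - P)) : H →ₗ[ℂ] H))ᗮ
              ⊓ LinearMap.ker (P : H →ₗ[ℂ] H) : Submodule ℂ H) := by
            apply le_antisymm <;> intro x hx <;> rw [Submodule.mem_inf] at hx ⊢ <;>
              refine ⟨hx.1, ?_⟩
            · exact LinearMap.mem_ker.2 ((hranQ x).1 hx.2)
            · exact (hranQ x).2 (LinearMap.mem_ker.1 hx.2)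
          rw [hset, Submodule.coe_inf]
          exact (Submodule.isClosed_orthogonal _).inter (isClosed_ker P)
      · intro y hy
        rw [Submodule.mem_inf] at hy
        obtain ⟨hy1, hy2⟩ := hy
        have hyP : P y = 0 := (hranQ y).1 hy2
        apply Submodule.le_topologicalClosure
        have hz : P (adjoint U y) = adjoint U y := by
          set z := adjoint U y - P (adjoint U y) with hzdef
          have h0 : ∀ w, ⟪z, w⟫ = 0 := fun w => by
            have l1 : ⟪adjoint U y, w⟫ = ⟪y, U w⟫ := adjoint_inner_left U w y
            have l2 : ⟪P (adjoint U y), w⟫ = ⟪y, U (P w)⟫ := by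
              rw [hPsa]; exact adjoint_inner_left U (P w) y
            have l3 : ⟪z, w⟫ = ⟪y, U (w - P w)⟫ := by
              rw [hzdef, inner_sub_left, l1, l2, ← inner_sub_right, ← map_sub]
            rw [l3, ← hAz w, ← inner_conj_symm]
            rw [show ((1 - P) ∘L (U ∘L (1 - P))) w = ((1 - P) ∘L (U ∘L (1 - P)) : H →ₗ[ℂ] H) w from rfl, (Submodule.mem_orthogonal _ y).1 hy1 _ (LinearMap.mem_range.2 ⟨w, rfl⟩)]
            simp
          have : z = 0 := inner_self_eq_zero.1 (h0 z)
          exact (sub_eq_zero.1 this).symm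
        have hmem : adjoint U y ∈ LinearMap.ker (P ∘L (U ∘L P) : H →ₗ[ℂ] H) ⊓ LinearMap.range (P : H →ₗ[ℂ] H) := by
          rw [hKmem]
          refine ⟨?_, hz⟩
          rw [hz, hURi y, hyP]
        rw [Submodule.mem_map]
        exact ⟨adjoint U y, hmem, by rw [hcoe, hBk _ hmem, hURi y]⟩
  · rintro ⟨h1, h2, h3a, h3b, h3c⟩
    have h2p : ∀ x, P (U (P (P (adjoint U (P x))))) = P x := fun x => by
      have := ContinuousLinearMap.ext_iff.1 h2 x
      simpa only [comp_apply] using this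
    have h2p' : ∀ x, P x = x → P (U (P (adjoint U x))) = x := fun x hx => by
      have h' := h2p x
      rw [hx] at h'
      rwa [hPp] at h'
    have hR3 : ∀ z, ∀ k ∈ LinearMap.ker (P ∘L (U ∘L P) : H →ₗ[ℂ] H) ⊓ LinearMap.range (P : H →ₗ[ℂ] H),
        ⟪P (adjoint U (P z)), k⟫ = 0 := fun z k hk => by
      obtain ⟨hk1, hk2⟩ := (hKmem k).1 hk
      calc ⟪P (adjoint U (P z)), k⟫ = ⟪adjoint U (P z), P k⟫ := hPsa _ _
        _ = ⟪P z, U (P k)⟫ := adjoint_inner_left U (P k) (P z)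
        _ = ⟪z, P (U (P k))⟫ := hPsa _ _
        _ = 0 := by rw [hk1, inner_zero_right]
    have hR4 : ∀ m, P m = m → (∀ k ∈ LinearMap.ker (P ∘L (U ∘L P) : H →ₗ[ℂ] H) ⊓ LinearMap.range (P : H →ₗ[ℂ] H),
        ⟪k, m⟫ = 0) → P (adjoint U (P (P (U (P m))))) = m := fun m hmP hmo => by
      set s := P (adjoint U (P (P (U (P m))))) with hsdef
      have hsP : P s = s := by rw [hsdef, hPp]
      have hcs : P (U (P s)) = P (U (P m)) := by
        rw [hsdef]
        simp only [hPp]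
        exact h2p' _ (hPp _)
      have hdK : m - s ∈ LinearMap.ker (P ∘L (U ∘L P) : H →ₗ[ℂ] H) ⊓ LinearMap.range (P : H →ₗ[ℂ] H) := by
        rw [hKmem]
        constructor
        · simp only [map_sub]
          rw [hcs, sub_self]
        · simp only [map_sub]
          rw [hmP, hsP]
      have hdm : ⟪m - s, m⟫ = 0 := hmo _ hdK
      have hds : ⟪m - s, s⟫ = 0 := by
        have h' := hR3 (P (U (P m))) (m - s) hdK
        rw [← hsdef] at h'
        rw [← inner_conj_symm, h', map_zero]
      have hd0 : m - s = 0 := by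
        have hz : ⟪m - s, m - s⟫ = 0 := by rw [inner_sub_right, hdm, hds, sub_self]
        exact inner_self_eq_zero.1 hz
      exact (sub_eq_zero.1 hd0).symm
    -- completeness of K
    have hKclosed : IsClosed
        ((LinearMap.ker (P ∘L (U ∘L P) : H →ₗ[ℂ] H) ⊓ LinearMap.range (P : H →ₗ[ℂ] H) : Submodule ℂ H) : Set H) := by
      have hset : (LinearMap.ker (P ∘L (U ∘L P) : H →ₗ[ℂ] H) ⊓ LinearMap.range (P : H →ₗ[ℂ] H) : Submodule ℂ H)
          = (LinearMap.ker (P ∘L (U ∘L P) : H →ₗ[ℂ] H) ⊓ LinearMap.ker (((1 : H →L[ℂ] H) - P : H →L[ℂ] H) : H →ₗ[ℂ] H)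
              : Submodule ℂ H) := by
        apply le_antisymm <;> intro x hx <;> rw [Submodule.mem_inf] at hx ⊢ <;>
          refine ⟨hx.1, ?_⟩
        · have hx2 := (hranP x).1 hx.2
          exact LinearMap.mem_ker.2 (by simp [sub_apply, one_apply, hx2])
        · have hx2 := LinearMap.mem_ker.1 hx.2
          simp only [ContinuousLinearMap.coe_coe, sub_apply, one_apply_eq_self] at hx2
          rw [sub_eq_zero] at hx2
          exact (hranP x).2 hx2.symm
      rw [hset, Submodule.coe_inf]
      exact (isClosed_ker _).inter (isClosed_ker _)
    haveI : CompleteSpace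
        (LinearMap.ker (P ∘L (U ∘L P) : H →ₗ[ℂ] H) ⊓ LinearMap.range (P : H →ₗ[ℂ] H) : Submodule ℂ H) :=
      hKclosed.completeSpace_coe
    set KK := LinearMap.ker (P ∘L (U ∘L P) : H →ₗ[ℂ] H) ⊓ LinearMap.range (P : H →ₗ[ℂ] H) with hKKdef
    have hUm : ∀ m, P m = m → m ∈ KKᗮ → U m = P (U (P m)) := fun m hmP hmo => by
      have hb := h3b m hmo
      rw [hBapp] at hb
      have h' : U (P m) = P (U (P m)) := sub_eq_zero.1 hb
      calc U m = U (P m) := by rw [hmP]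
        _ = P (U (P m)) := h'
    have hCC : ∀ a m', P m' = m' → (∀ k ∈ KK, ⟪k, m'⟫ = 0) →
        ⟪P (U (P a)), P (U (P m'))⟫ = ⟪a, m'⟫ := fun a m' hm'P hm'o => by
      calc ⟪P (U (P a)), P (U (P m'))⟫
          = ⟪U (P a), P (P (U (P m')))⟫ := hPsa _ _
        _ = ⟪P a, adjoint U (P (P (U (P m'))))⟫ := (adjoint_inner_right U (P a) _).symm
        _ = ⟪a, P (adjoint U (P (P (U (P m')))))⟫ := hPsa _ _
        _ = ⟪a, m'⟫ := by rw [hR4 m' hm'P hm'o]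
    have h1' : ∀ z ∈ LinearMap.ker (P : H →ₗ[ℂ] H), ‖U z‖ = ‖z‖ := fun z hz => h1 z (LinearMap.mem_ker.1 hz)
    have hBorth : ∀ k ∈ KK, ∀ z : H, ⟪U (z - P z), ((1 - P) ∘L (U ∘L P)) k⟫ = 0 := by
      intro k hk z
      have h' : ((1 - P) ∘L (U ∘L P)) k ∈ (KK.map ((1 - P) ∘L (U ∘L P) : H →ₗ[ℂ] H)) :=
        Submodule.mem_map.2 ⟨k, hk, rfl⟩
      have hmem := Submodule.le_topologicalClosure _ h'
      rw [h3c] at hmem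
      have hο := (Submodule.mem_inf.1 hmem).1
      exact (Submodule.mem_orthogonal _ _).1 hο _ (LinearMap.mem_range.2 ⟨z, hAz z⟩)
    have hPB : ∀ v, P (((1 - P) ∘L (U ∘L P)) v) = 0 := fun v => by
      rw [hBapp, map_sub, hPp, sub_self]
    have hcross : ∀ q b, P q = 0 → P b = b → ⟪U q, U b⟫ = 0 := fun q b hq hb => by
      set k' : H := ↑(KK.orthogonalProjectionOnto b) with hk'def
      have hk'K : k' ∈ KK := by rw [hk'def]; exact SetLike.coe_mem _
      have hm'o : b - k' ∈ KKᗮ := by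
        rw [hk'def]; exact Submodule.sub_starProjection_mem_orthogonal b
      have hk'P : P k' = k' := ((hKmem k').1 hk'K).2
      have hm'P : P (b - k') = b - k' := by rw [map_sub, hb, hk'P]
      have hsplit : U b = ((1 - P) ∘L (U ∘L P)) k' + P (U (P (b - k'))) := by
        calc U b = U (k' + (b - k')) := by rw [add_sub_cancel]
          _ = U k' + U (b - k') := map_add U _ _
          _ = ((1 - P) ∘L (U ∘L P)) k' + P (U (P (b - k'))) := by
              rw [hBk k' hk'K, hUm _ hm'P hm'o]
      rw [hsplit, inner_add_right]
      have t1 : ⟪U q, ((1 - P) ∘L (U ∘L P)) k'⟫ = 0 := by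
        have h' := hBorth k' hk'K q
        rw [hq, sub_zero] at h'
        exact h'
      have t2 : ⟪U q, P (U (P (b - k')))⟫ = 0 := by
        have hPUq : P (U q) = 0 := by rw [htriP q, hq]; simp
        rw [← hPsa, hPUq, inner_zero_left]
      rw [t1, t2, add_zero]
    have hinnerP : ∀ a b, P a = a → P b = b → ⟪U a, U b⟫ = ⟪a, b⟫ := fun a b ha hb => by
      set k : H := ↑(KK.orthogonalProjectionOnto a) with hkdef
      have hkK : k ∈ KK := by rw [hkdef]; exact SetLike.coe_mem _
      have hmo : a - k ∈ KKᗮ := by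
        rw [hkdef]; exact Submodule.sub_starProjection_mem_orthogonal a
      have hkP : P k = k := ((hKmem k).1 hkK).2
      have hmP : P (a - k) = a - k := by rw [map_sub, ha, hkP]
      set k' : H := ↑(KK.orthogonalProjectionOnto b) with hk'def
      have hk'K : k' ∈ KK := by rw [hk'def]; exact SetLike.coe_mem _
      have hm'o : b - k' ∈ KKᗮ := by
        rw [hk'def]; exact Submodule.sub_starProjection_mem_orthogonal b
      have hk'P : P k' = k' := ((hKmem k').1 hk'K).2
      have hm'P : P (b - k') = b - k' := by rw [map_sub, hb, hk'P]
      have hsa : U a = ((1 - P) ∘L (U ∘L P)) k + P (U (P (a - k))) := by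
        calc U a = U (k + (a - k)) := by rw [add_sub_cancel]
          _ = U k + U (a - k) := map_add U _ _
          _ = _ := by rw [hBk k hkK, hUm _ hmP hmo]
      have hsb : U b = ((1 - P) ∘L (U ∘L P)) k' + P (U (P (b - k'))) := by
        calc U b = U (k' + (b - k')) := by rw [add_sub_cancel]
          _ = U k' + U (b - k') := map_add U _ _
          _ = _ := by rw [hBk k' hk'K, hUm _ hm'P hm'o]
      have tkk : ⟪((1 - P) ∘L (U ∘L P)) k, ((1 - P) ∘L (U ∘L P)) k'⟫ = ⟪k, k'⟫ :=
        aux_inner_of_norm KK _ h3a hkK hk'K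
      have tkm : ⟪((1 - P) ∘L (U ∘L P)) k, P (U (P (b - k')))⟫ = 0 := by
        rw [← hPsa, hPB, inner_zero_left]
      have tmk : ⟪P (U (P (a - k))), ((1 - P) ∘L (U ∘L P)) k'⟫ = 0 := by
        rw [hPsa, hPB, inner_zero_right]
      have tmm : ⟪P (U (P (a - k))), P (U (P (b - k')))⟫ = ⟪a - k, b - k'⟫ :=
        hCC _ _ hm'P (fun u hu => (Submodule.mem_orthogonal _ _).1 hm'o u hu)
      have skm : ⟪k, b - k'⟫ = 0 := (Submodule.mem_orthogonal _ _).1 hm'o k hkK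
      have smk : ⟪a - k, k'⟫ = 0 := by
        rw [← inner_conj_symm, (Submodule.mem_orthogonal _ _).1 hmo k' hk'K, map_zero]
      calc ⟪U a, U b⟫
          = (⟪((1 - P) ∘L (U ∘L P)) k, ((1 - P) ∘L (U ∘L P)) k'⟫
              + ⟪((1 - P) ∘L (U ∘L P)) k, P (U (P (b - k')))⟫)
            + (⟪P (U (P (a - k))), ((1 - P) ∘L (U ∘L P)) k'⟫
              + ⟪P (U (P (a - k))), P (U (P (b - k')))⟫) := by
            rw [hsa, hsb, inner_add_left, inner_add_right, inner_add_right]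
        _ = ⟪k, k'⟫ + ⟪a - k, b - k'⟫ := by rw [tkk, tkm, tmk, tmm]; ring
        _ = ⟪a, b⟫ := by
            conv_rhs => rw [show a = k + (a - k) by rw [add_sub_cancel],
              show b = k' + (b - k') by rw [add_sub_cancel]]
            rw [inner_add_left, inner_add_right, inner_add_right, skm, smk]
            ring
    have hmain : ∀ x y : H, ⟪U x, U y⟫ = ⟪x, y⟫ := fun x y => by
      have hqx : P (x - P x) = 0 := by simp [map_sub, hPp]
      have hqy : P (y - P y) = 0 := by simp [map_sub, hPp]
      have t1 : ⟪U (x - P x), U (y - P y)⟫ = ⟪x - P x, y - P y⟫ :=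
        aux_inner_of_norm (LinearMap.ker (P : H →ₗ[ℂ] H)) U h1'
          (LinearMap.mem_ker.2 hqx) (LinearMap.mem_ker.2 hqy)
      have t2 : ⟪U (x - P x), U (P y)⟫ = 0 := hcross _ _ hqx (hPp y)
      have t3 : ⟪U (P x), U (y - P y)⟫ = 0 := by
        rw [← inner_conj_symm, hcross _ _ hqy (hPp x), map_zero]
      have t4 : ⟪U (P x), U (P y)⟫ = ⟪P x, P y⟫ := hinnerP _ _ (hPp x) (hPp y)
      have s2 : ⟪x - P x, P y⟫ = 0 := by rw [← hPsa, hqx, inner_zero_left]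
      have s3 : ⟪P x, y - P y⟫ = 0 := by rw [hPsa, hqy, inner_zero_right]
      calc ⟪U x, U y⟫
          = ⟪U ((x - P x) + P x), U ((y - P y) + P y)⟫ := by rw [sub_add_cancel, sub_add_cancel]
        _ = (⟪U (x - P x), U (y - P y)⟫ + ⟪U (x - P x), U (P y)⟫)
            + (⟪U (P x), U (y - P y)⟫ + ⟪U (P x), U (P y)⟫) := by
            rw [map_add, map_add, inner_add_left, inner_add_right, inner_add_right]
        _ = ⟪x - P x, y - P y⟫ + ⟪P x, P y⟫ := by rw [t1, t2, t3, t4]; ring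
        _ = ⟪x, y⟫ := by
            conv_rhs => rw [show x = (x - P x) + P x by rw [sub_add_cancel],
              show y = (y - P y) + P y by rw [sub_add_cancel]]
            rw [inner_add_left, inner_add_right, inner_add_right, s2, s3]
            ring
    have hL : adjoint U ∘L U = 1 := by
      ext x
      refine ext_inner_right ℂ fun v => ?_
      simp only [comp_apply, one_apply]
      rw [adjoint_inner_left]
      exact hmain x v
    refine ⟨hL, ?_⟩
    have hsurj : ∀ w : H, (∀ z, ⟪U z, w⟫ = 0) → w = 0 := fun w hw => by
      have hPw : P w = 0 := by
        have hvP : P (P (adjoint U (P w))) = P (adjoint U (P w)) := hPp _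
        have hvo : P (adjoint U (P w)) ∈ KKᗮ := by
          rw [Submodule.mem_orthogonal]
          intro u hu
          rw [← inner_conj_symm, hR3 w u hu, map_zero]
        have hUv : U (P (adjoint U (P w))) = P (U (P (P (adjoint U (P w))))) :=
          hUm _ hvP hvo
        have hUvw : U (P (adjoint U (P w))) = P w := by rw [hUv, h2p w]
        have hin : ⟪P w, w⟫ = 0 := by rw [← hUvw]; exact hw _
        have h2' : ⟪P w, P w⟫ = 0 := by
          rw [← hPsa (P w) w, hPp w]
          exact hin
        exact inner_self_eq_zero.1 h2'
      have hwmem : w ∈ (KK.map ((1 - P) ∘L (U ∘L P) : H →ₗ[ℂ] H)).topologicalClosure := by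
        rw [h3c, Submodule.mem_inf]
        constructor
        · rw [Submodule.mem_orthogonal]
          intro u hu
          obtain ⟨z, rfl⟩ := LinearMap.mem_range.1 hu
          rw [ContinuousLinearMap.coe_coe, hAz z]
          exact hw (z - P z)
        · exact (hranQ w).2 hPw
      have hvanish : ∀ u ∈ (KK.map ((1 - P) ∘L (U ∘L P) : H →ₗ[ℂ] H) : Set H),
          ⟪u, w⟫ = 0 := by
        intro u hu
        obtain ⟨kk, hkk, rfl⟩ := Submodule.mem_map.1 hu
        rw [hcoe, hBk kk hkk]
        exact hw kk
      have hTclosed : IsClosed {u : H | ⟪u, w⟫ = 0} := by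
        have heq : {u : H | ⟪u, w⟫ = 0} = (fun u : H => (⟪u, w⟫ : ℂ)) ⁻¹' {0} := rfl
        rw [heq]
        exact IsClosed.preimage (Continuous.inner continuous_id continuous_const)
          isClosed_singleton
      have hsub : closure ((KK.map ((1 - P) ∘L (U ∘L P) : H →ₗ[ℂ] H)) : Set H)
          ⊆ {u : H | ⟪u, w⟫ = 0} := closure_minimal hvanish hTclosed
      have hww : ⟪w, w⟫ = 0 := hsub (by
        rw [← Submodule.topologicalClosure_coe]
        exact hwmem)
      exact inner_self_eq_zero.1 hww
    ext x
    simp only [comp_apply, one_apply]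
    have hkey : ∀ z, ⟪U z, U (adjoint U x) - x⟫ = 0 := fun z => by
      rw [inner_sub_right, hmain, adjoint_inner_right, sub_self]
    exact sub_eq_zero.1 (hsurj _ hkey)
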